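/- arXiv:1711.02045 — 2 statements merged into one kernel-verified Lean document; each statement's English description precedes it below -/
import Mathlib

section
/- Suppose {A_i} is a sequence of subsets of ℝ^n such that A ⊆ A_i for all i, converging to the closed set A in the Hausdorff sense with respect to compact subsets. If each complement ℝ^n ∖ A_i is globally k-convex, then ℝ^n ∖ A is also globally k-convex. -/
open CategoryTheory

/-- The singular chain complex of a topological space. -/
noncomputable def singularChains : TopCat.{0} ⥤ ChainComplex AddCommGrpCat.{0} ℕ :=
  TopCat.toSSet ⋙ (CategoryTheory.SimplicialObject.whiskering _ _).obj AddCommGrpCat.free ⋙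
    AlgebraicTopology.alternatingFaceMapComplex AddCommGrpCat

/-- Singular homology in degree `q`, as a functor. -/
noncomputable def singularHomology (q : ℕ) : TopCat.{0} ⥤ AddCommGrpCat.{0} :=
  singularChains ⋙ HomologicalComplex.homologyFunctor _ _ q

/-- The map to the one-point space. -/
def toPt (X : TopCat.{0}) : X ⟶ TopCat.of PUnit :=
  TopCat.ofHom ⟨fun _ => PUnit.unit, continuous_const⟩

/-- `f : X ⟶ Y` induces an injective map on *reduced* singular homology in degree `q`.
(Reduced homology is identified with the kernel of the map induced by `X → pt`.) -/
def ReducedHomologyMapInjective (q : ℕ) {X Y : TopCat.{0}} (f : X ⟶ Y) : Prop :=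
  ∀ a : (singularHomology q).obj X,
    (singularHomology q).map (toPt X) a = 0 →
    (singularHomology q).map f a = 0 → a = 0

/-- The inclusion of a subset into a larger subset, as a morphism of `TopCat`. -/
noncomputable def inclTop {n : ℕ} (s t : Set (EuclideanSpace ℝ (Fin n))) (h : s ⊆ t) :
    TopCat.of s ⟶ TopCat.of t :=
  TopCat.ofHom ⟨Set.inclusion h, continuous_inclusion h⟩

/-- `X ⊆ ℝⁿ` is globally `k`-convex if for every affine `k`-plane `L ⊆ ℝⁿ` the
inclusion-induced map on reduced singular homology `H̃_{k-1}(L ∩ X) → H̃_{k-1}(X)`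
is injective. -/
def GloballyConvex (n k : ℕ) (X : Set (EuclideanSpace ℝ (Fin n))) : Prop :=
  ∀ L : AffineSubspace ℝ (EuclideanSpace ℝ (Fin n)),
    (L : Set (EuclideanSpace ℝ (Fin n))).Nonempty →
    Module.finrank ℝ L.direction = k →
    ReducedHomologyMapInjective (k - 1)
      (inclTop (↑L ∩ X) X Set.inter_subset_right)

/-- A sequence of sets `A i ⊆ ℝⁿ` converges to `B ⊆ ℝⁿ` in the Hausdorff sense with
respect to compact subsets: for every compact `K`, the Hausdorff distance between
`A i ∩ K` and `B ∩ K` tends to `0` (in the extended sense, so that it is `0` when both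
sets are empty). -/
def HausdorffConvergesTo {n : ℕ} (A : ℕ → Set (EuclideanSpace ℝ (Fin n)))
    (B : Set (EuclideanSpace ℝ (Fin n))) : Prop :=
  ∀ K : Set (EuclideanSpace ℝ (Fin n)), IsCompact K →
    Filter.Tendsto (fun i => Metric.hausdorffEDist (A i ∩ K) (B ∩ K))
      Filter.atTop (nhds 0)

/-! ### Auxiliary material -/

namespace SingularAux

instance (x : SimplexCategory) : CompactSpace (SimplexCategory.toTop.obj x) :=
  inferInstanceAs (CompactSpace (ULift (stdSimplex ℝ (Fin (x.len + 1)))))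

/-- The underlying point in `ℝⁿ` of a point of a subspace of `ℝⁿ`, seen as `TopCat` object. -/
def toEuc {n : ℕ} {s : Set (EuclideanSpace ℝ (Fin n))} (x : (TopCat.of ↑s : TopCat.{0})) :
    EuclideanSpace ℝ (Fin n) := x.1

theorem toEuc_mem {n : ℕ} {s : Set (EuclideanSpace ℝ (Fin n))} (x : (TopCat.of ↑s : TopCat.{0})) :
    toEuc x ∈ s := x.2

theorem toFinsupp_map {α β : Type} (f : α → β) (x : FreeAbelianGroup α) :
    (FreeAbelianGroup.map f x).toFinsupp = Finsupp.mapDomain f x.toFinsupp := by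
  have h : FreeAbelianGroup.toFinsupp.comp (FreeAbelianGroup.map f)
      = (Finsupp.mapDomain.addMonoidHom f).comp FreeAbelianGroup.toFinsupp := by
    apply FreeAbelianGroup.lift.symm.injective
    funext y
    show FreeAbelianGroup.toFinsupp (FreeAbelianGroup.map f (FreeAbelianGroup.of y))
      = Finsupp.mapDomain f (FreeAbelianGroup.toFinsupp (FreeAbelianGroup.of y))
    rw [FreeAbelianGroup.map_of_apply, FreeAbelianGroup.toFinsupp_of,
      FreeAbelianGroup.toFinsupp_of, Finsupp.mapDomain_single]
  exact congrArg (fun g => g x) h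

theorem fag_map_injective {α β : Type} {f : α → β} (hf : Function.Injective f) :
    Function.Injective (FreeAbelianGroup.map f) := by
  intro x y h
  have h2 := congrArg FreeAbelianGroup.toFinsupp h
  rw [toFinsupp_map, toFinsupp_map] at h2
  have h3 := Finsupp.mapDomain_injective hf h2
  have h4 := congrArg Finsupp.toFreeAbelianGroup h3
  rwa [Finsupp.toFreeAbelianGroup_toFinsupp, Finsupp.toFreeAbelianGroup_toFinsupp] at h4

theorem fag_mem_range {α β : Type} (f : α → β) (x : FreeAbelianGroup β)
    (h : ∀ s ∈ x.support, ∃ a, f a = s) : ∃ y, FreeAbelianGroup.map f y = x := by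
  refine ⟨x.toFinsupp.support.attach.sum
    (fun s => x.toFinsupp s.1 • FreeAbelianGroup.of (Classical.choose (h s.1 s.2))), ?_⟩
  rw [map_sum]
  have key : ∀ s : {a // a ∈ x.toFinsupp.support},
      FreeAbelianGroup.map f (x.toFinsupp s.1 • FreeAbelianGroup.of
        (Classical.choose (h s.1 s.2))) = x.toFinsupp s.1 • FreeAbelianGroup.of s.1 := by
    intro s
    rw [map_zsmul, FreeAbelianGroup.map_of_apply, Classical.choose_spec (h s.1 s.2)]
  rw [Finset.sum_congr rfl (fun s _ => key s)]
  rw [Finset.sum_attach x.toFinsupp.support (fun s => x.toFinsupp s • FreeAbelianGroup.of s)]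
  conv_rhs => rw [← Finsupp.toFreeAbelianGroup_toFinsupp (X := β) x]
  rw [Finsupp.toFreeAbelianGroup, Finsupp.liftAddHom_apply]
  rfl

/-- Construct an element of `C.cycles q` from a chain killed by all differentials. -/
noncomputable def cyc (C : ChainComplex AddCommGrpCat.{0} ℕ) (q : ℕ) (x : C.X q)
    (hx : ∀ j, C.d q j x = 0) : C.cycles q :=
  C.liftCycles (AddCommGrpCat.ofHom (zmultiplesHom _ x)) _ rfl
    (AddCommGrpCat.hom_ext (AddMonoidHom.ext_int (by simpa using hx _))) (1 : ℤ)

theorem cyc_i (C : ChainComplex AddCommGrpCat.{0} ℕ) (q : ℕ) (x : C.X q) (hx) :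
    C.iCycles q (cyc C q x hx) = x := by
  have h := C.liftCycles_i (AddCommGrpCat.ofHom (zmultiplesHom _ x)) ((ComplexShape.down ℕ).next q)
    rfl (AddCommGrpCat.hom_ext (AddMonoidHom.ext_int (by simpa using hx _)))
  have h2 := congrArg (fun f => f (1:ℤ)) h
  simp only [comp_apply] at h2
  unfold cyc
  convert h2 using 2
  simp

theorem pi_surj (C : ChainComplex AddCommGrpCat.{0} ℕ) (q : ℕ) :
    Function.Surjective (C.homologyπ q) :=
  (AddCommGrpCat.epi_iff_surjective _).1 inferInstance

theorem exactness (C : ChainComplex AddCommGrpCat.{0} ℕ) (q : ℕ) (x : C.cycles q)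
    (hx : C.homologyπ q x = 0) : ∃ c : C.X (q+1), C.toCycles (q+1) q c = x :=
  (ShortComplex.mk (C.toCycles (q+1) q) (C.homologyπ q)
      (C.toCycles_comp_homologyπ (q+1) q)).ab_exact_iff.1
    (ShortComplex.exact_of_g_is_cokernel _ (C.homologyIsCokernel (q+1) q (by simp))) x hx

theorem natur {C D : ChainComplex AddCommGrpCat.{0} ℕ} (φ : C ⟶ D) (q : ℕ) (x : C.cycles q) :
    HomologicalComplex.homologyMap φ q (C.homologyπ q x) =
      D.homologyπ q (HomologicalComplex.cyclesMap φ q x) := by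
  rw [← comp_apply, HomologicalComplex.homologyπ_naturality, comp_apply]

theorem cyclesMap_i' {C D : ChainComplex AddCommGrpCat.{0} ℕ} (φ : C ⟶ D) (q : ℕ)
    (x : C.cycles q) :
    D.iCycles q (HomologicalComplex.cyclesMap φ q x) = φ.f q (C.iCycles q x) := by
  rw [← comp_apply, HomologicalComplex.cyclesMap_i, comp_apply]

theorem d_iCycles (C : ChainComplex AddCommGrpCat.{0} ℕ) (q j : ℕ) (x : C.cycles q) :
    C.d q j (C.iCycles q x) = 0 := by
  rw [← comp_apply, C.iCycles_d, AddCommGrpCat.zero_apply]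

theorem i_toCycles (C : ChainComplex AddCommGrpCat.{0} ℕ) (q : ℕ) (c : C.X (q+1)) :
    C.iCycles q (C.toCycles (q+1) q c) = C.d (q+1) q c := by
  rw [← comp_apply, C.toCycles_i]

theorem toCycles_pi (C : ChainComplex AddCommGrpCat.{0} ℕ) (q : ℕ) (c : C.X (q+1)) :
    C.homologyπ q (C.toCycles (q+1) q c) = 0 := by
  rw [← comp_apply, C.toCycles_comp_homologyπ, AddCommGrpCat.zero_apply]

theorem i_injective (C : ChainComplex AddCommGrpCat.{0} ℕ) (q : ℕ) :
    Function.Injective (C.iCycles q) :=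
  (AddCommGrpCat.mono_iff_injective _).1 inferInstance

theorem d_comm {C D : ChainComplex AddCommGrpCat.{0} ℕ} (φ : C ⟶ D) (i j : ℕ) (x : C.X i) :
    D.d i j (φ.f i x) = φ.f j (C.d i j x) := by
  rw [← comp_apply, φ.comm i j, comp_apply]

theorem inclTop_injective {n : ℕ} (s t : Set (EuclideanSpace ℝ (Fin n))) (h : s ⊆ t) :
    Function.Injective (inclTop s t h) :=
  fun x y hxy => Set.inclusion_injective h hxy

/-- The type of singular `m`-simplices of `X`. -/
abbrev Smp (m : ℕ) (X : TopCat.{0}) : Type :=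
  ULift.{0} <| SimplexCategory.toTop.obj (SimplexCategory.mk m) ⟶ X

theorem comp_injective {X Y : TopCat.{0}} (f : X ⟶ Y) (hf : Function.Injective f) (m : ℕ) :
    Function.Injective (fun σ : Smp m X => (ULift.up (σ.down ≫ f) : Smp m Y)) := by
  intro σ τ h
  refine ULift.ext _ _ ?_
  ext p
  exact hf (congrFun (congrArg (fun g : Smp m Y => (g.down : _ → _)) h) p)

theorem mainAux {S X S' X' : TopCat.{0}} (u : S' ⟶ S) (v : X' ⟶ X) (j : S ⟶ X) (j' : S' ⟶ X')
    (hcomm : j' ≫ v = u ≫ j) (hu : Function.Injective u) (hv : Function.Injective v)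
    (q : ℕ) (a : (singularHomology q).obj S)
    (z : (singularChains.obj S).cycles q) (hz : (singularChains.obj S).homologyπ q z = a)
    (c : (singularChains.obj X).X (q+1))
    (hdc : (singularChains.obj X).d (q+1) q c
      = (singularChains.map j).f q ((singularChains.obj S).iCycles q z))
    (hZlift : ∀ σ ∈ FreeAbelianGroup.support (X := Smp q S)
      ((singularChains.obj S).iCycles q z),
      ∃ σ' : Smp q S', ULift.up (σ'.down ≫ u) = σ)
    (hclift : ∀ τ ∈ FreeAbelianGroup.support (X := Smp (q+1) X) c,
      ∃ τ' : Smp (q+1) X', ULift.up (τ'.down ≫ v) = τ)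
    (hred : (singularHomology q).map (toPt S) a = 0)
    (hinj : ReducedHomologyMapInjective q j') : a = 0 := by
  obtain ⟨Z', hZ'⟩ : ∃ Z' : (singularChains.obj S').X q,
      FreeAbelianGroup.map (fun σ : Smp q S' => (ULift.up (σ.down ≫ u) : Smp _ S)) Z'
        = (singularChains.obj S).iCycles q z := fag_mem_range (fun σ : Smp q S' => (ULift.up (σ.down ≫ u) : Smp _ S)) _ hZlift
  obtain ⟨c', hc'⟩ : ∃ c' : (singularChains.obj X').X (q+1),
      FreeAbelianGroup.map (fun τ : Smp (q+1) X' => (ULift.up (τ.down ≫ v) : Smp _ X)) c'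
        = c := fag_mem_range (fun τ : Smp (q+1) X' => (ULift.up (τ.down ≫ v) : Smp _ X)) _ hclift
  have hdZ' : ∀ jdx, (singularChains.obj S').d q jdx Z' = 0 := by
    intro jdx
    refine fag_map_injective (comp_injective u hu jdx) ?_
    show (singularChains.map u).f jdx ((singularChains.obj S').d q jdx Z')
      = FreeAbelianGroup.map (fun σ : Smp jdx S' => (ULift.up (σ.down ≫ u) : Smp _ S)) 0
    rw [← d_comm]
    have h1 : (singularChains.map u).f q Z' = (singularChains.obj S).iCycles q z := hZ'
    rw [h1, d_iCycles]
    exact (map_zero (FreeAbelianGroup.map (fun σ : Smp jdx S' => (ULift.up (σ.down ≫ u) : Smp _ S)))).symm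
  set z' := cyc (singularChains.obj S') q Z' hdZ' with hz'def
  have hiz' : (singularChains.obj S').iCycles q z' = Z' := cyc_i _ _ _ _
  have hmapz : HomologicalComplex.cyclesMap (singularChains.map u) q z' = z := by
    apply i_injective
    rw [cyclesMap_i', hiz']
    exact hZ'
  set b : (singularHomology q).obj S' := (singularChains.obj S').homologyπ q z' with hbdef
  have hub : (singularHomology q).map u b = a := by
    show HomologicalComplex.homologyMap (singularChains.map u) q _ = a
    rw [hbdef, natur, hmapz, hz]
  have hredb : (singularHomology q).map (toPt S') b = 0 := by
    have h1 : toPt S' = u ≫ toPt S := rfl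
    rw [h1, Functor.map_comp, comp_apply, hub, hred]
  have hjb : (singularHomology q).map j' b = 0 := by
    show HomologicalComplex.homologyMap (singularChains.map j') q _ = 0
    rw [hbdef, natur]
    have hcyc : HomologicalComplex.cyclesMap (singularChains.map j') q z'
        = (singularChains.obj X').toCycles (q+1) q c' := by
      apply i_injective
      rw [cyclesMap_i', hiz', i_toCycles]
      refine fag_map_injective (comp_injective v hv q) ?_
      show (singularChains.map v).f q ((singularChains.map j').f q Z')
        = (singularChains.map v).f q ((singularChains.obj X').d (q+1) q c')
      rw [← d_comm]
      have h2 : (singularChains.map v).f (q+1) c' = c := hc'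
      rw [h2]
      have h3 : (singularChains.map v).f q ((singularChains.map j').f q Z')
          = (singularChains.map (j' ≫ v)).f q Z' := by
        rw [singularChains.map_comp, HomologicalComplex.comp_f, comp_apply]
      rw [h3, hcomm, singularChains.map_comp, HomologicalComplex.comp_f, comp_apply]
      have h4 : (singularChains.map u).f q Z' = (singularChains.obj S).iCycles q z := hZ'
      rw [h4, hdc]
    rw [hcyc, toCycles_pi]
  have hb0 : b = 0 := hinj b hredb hjb
  rw [← hub, hb0, map_zero]

end SingularAux

/-- If `A ⊆ A i` for all `i`, the sets `A i` converge to the closed set `A` in the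
Hausdorff sense with respect to compact subsets, and every complement `ℝⁿ ∖ A i` is
globally `k`-convex, then `ℝⁿ ∖ A` is globally `k`-convex. -/
theorem globallyConvex_of_hausdorff_limit
    (n k : ℕ) (A : ℕ → Set (EuclideanSpace ℝ (Fin n)))
    (A₀ : Set (EuclideanSpace ℝ (Fin n))) (hA₀ : IsClosed A₀)
    (hsub : ∀ i, A₀ ⊆ A i) (hconv : HausdorffConvergesTo A A₀)
    (hconvex : ∀ i, GloballyConvex n k (A i)ᶜ) :
    GloballyConvex n k A₀ᶜ := by
  intro L hL hdim a ha0 haj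
  obtain ⟨z, hz⟩ := SingularAux.pi_surj
    (singularChains.obj (TopCat.of ↑(↑L ∩ A₀ᶜ))) (k-1) a
  have haj' : HomologicalComplex.homologyMap
      (singularChains.map (inclTop (↑L ∩ A₀ᶜ) A₀ᶜ Set.inter_subset_right)) (k-1) a = 0 := haj
  rw [← hz, SingularAux.natur] at haj'
  obtain ⟨c, hc⟩ := SingularAux.exactness (singularChains.obj (TopCat.of ↑(A₀ᶜ))) (k-1) _ haj'
  have hdc : (singularChains.obj (TopCat.of ↑(A₀ᶜ))).d (k-1+1) (k-1) c
      = (singularChains.map (inclTop (↑L ∩ A₀ᶜ) A₀ᶜ Set.inter_subset_right)).f (k-1)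
        ((singularChains.obj (TopCat.of ↑(↑L ∩ A₀ᶜ))).iCycles (k-1) z) := by
    rw [← SingularAux.i_toCycles, hc, SingularAux.cyclesMap_i']
  -- the compact set supporting everything
  obtain ⟨K, hKcomp, hKA₀, hKZ, hKc⟩ :
      ∃ K : Set (EuclideanSpace ℝ (Fin n)), IsCompact K ∧ A₀ ∩ K = ∅ ∧
        (∀ σ ∈ FreeAbelianGroup.support
          (X := SingularAux.Smp (k-1) (TopCat.of ↑(↑L ∩ A₀ᶜ)))
          ((singularChains.obj (TopCat.of ↑(↑L ∩ A₀ᶜ))).iCycles (k-1) z),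
          ∀ p, SingularAux.toEuc (σ.down p) ∈ K) ∧
        (∀ τ ∈ FreeAbelianGroup.support
          (X := SingularAux.Smp (k-1+1) (TopCat.of ↑(A₀ᶜ))) c,
          ∀ p, SingularAux.toEuc (τ.down p) ∈ K)
      := by
    refine ⟨(⋃ σ ∈ ((FreeAbelianGroup.support
        (X := SingularAux.Smp (k-1) (TopCat.of ↑(↑L ∩ A₀ᶜ)))
        ((singularChains.obj (TopCat.of ↑(↑L ∩ A₀ᶜ))).iCycles (k-1) z)) : Finset _),
        Set.range (fun p => SingularAux.toEuc (σ.down p))) ∪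
      (⋃ τ ∈ ((FreeAbelianGroup.support
          (X := SingularAux.Smp (k-1+1) (TopCat.of ↑(A₀ᶜ))) c) : Finset _),
        Set.range (fun p => SingularAux.toEuc (τ.down p))), ?_, ?_, ?_, ?_⟩
    · apply IsCompact.union
      · exact (Finset.finite_toSet _).isCompact_biUnion (fun σ _ =>
          isCompact_range (continuous_subtype_val.comp σ.down.hom.continuous))
      · exact (Finset.finite_toSet _).isCompact_biUnion (fun τ _ =>
          isCompact_range (continuous_subtype_val.comp τ.down.hom.continuous))
    · rw [Set.eq_empty_iff_forall_notMem]
      rintro p ⟨hp1, hp2⟩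
      rcases hp2 with h | h
      · obtain ⟨s, ⟨σ, rfl⟩, hs⟩ := h
        obtain ⟨_, ⟨hσ, rfl⟩, ⟨pt, rfl⟩⟩ := hs
        exact (SingularAux.toEuc_mem (σ.down pt)).2 hp1
      · obtain ⟨s, ⟨τ, rfl⟩, hs⟩ := h
        obtain ⟨_, ⟨hτ, rfl⟩, ⟨pt, rfl⟩⟩ := hs
        exact SingularAux.toEuc_mem (τ.down pt) hp1
    · intro σ hσ p
      exact Set.mem_union_left _ (Set.mem_biUnion hσ ⟨p, rfl⟩)
    · intro τ hτ p
      exact Set.mem_union_right _ (Set.mem_biUnion hτ ⟨p, rfl⟩)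
  -- find i with A i ∩ K = ∅
  obtain ⟨i, hi⟩ : ∃ i, A i ∩ K = ∅ := by
    have h := hconv K hKcomp
    rw [hKA₀] at h
    have h2 := (h.eventually_lt_const (show (0:ENNReal) < ⊤ by simp)).exists
    obtain ⟨i, hi⟩ := h2
    refine ⟨i, ?_⟩
    by_contra hne
    rw [Set.eq_empty_iff_forall_notMem] at hne
    push_neg at hne
    obtain ⟨p, hp⟩ := hne
    rw [Metric.hausdorffEDist_empty ⟨p, hp⟩] at hi
    exact lt_irrefl _ hi
  have hAiK : ∀ x : EuclideanSpace ℝ (Fin n), x ∈ K → x ∉ A i := by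
    intro x hx hxa
    exact Set.eq_empty_iff_forall_notMem.1 hi x ⟨hxa, hx⟩
  -- now apply mainAux
  refine SingularAux.mainAux
    (inclTop (↑L ∩ (A i)ᶜ) (↑L ∩ A₀ᶜ)
      (Set.inter_subset_inter subset_rfl (Set.compl_subset_compl.2 (hsub i))))
    (inclTop (A i)ᶜ A₀ᶜ (Set.compl_subset_compl.2 (hsub i)))
    (inclTop (↑L ∩ A₀ᶜ) A₀ᶜ Set.inter_subset_right)
    (inclTop (↑L ∩ (A i)ᶜ) (A i)ᶜ Set.inter_subset_right)
    rfl
    (SingularAux.inclTop_injective _ _ _) (SingularAux.inclTop_injective _ _ _)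
    (k-1) a z hz c hdc ?_ ?_ ha0 (hconvex i L hL hdim)
  · intro σ hσ
    refine ⟨⟨TopCat.ofHom ⟨fun p => ⟨SingularAux.toEuc (σ.down p), (SingularAux.toEuc_mem (σ.down p)).1,
        fun hmem => hAiK _ (hKZ σ hσ p) hmem⟩,
      (continuous_subtype_val.comp σ.down.hom.continuous).subtype_mk _⟩⟩, ?_⟩
    refine ULift.ext _ _ ?_
    ext p
    rfl
  · intro τ hτ
    refine ⟨⟨TopCat.ofHom ⟨fun p => ⟨SingularAux.toEuc (τ.down p),
        fun hmem => hAiK _ (hKc τ hτ p) hmem⟩,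
      (continuous_subtype_val.comp τ.down.hom.continuous).subtype_mk _⟩⟩, ?_⟩
    refine ULift.ext _ _ ?_
    ext p
    rfl
end

section
/- Let F ⊆ ℝ^n be a closed set and m ≥ 1 an integer. If the complement ℝ^n ∖ F is not globally q-convex, then the complement ℝ^{m+n} ∖ (ℝ^m × F) is not globally q-convex, where ℝ^m × F = {(y, x) ∈ ℝ^m × ℝ^n : x ∈ F}. -/
open CategoryTheory

/-- The product `ℝᵐ × S ⊆ ℝ^{m+n}` of `ℝᵐ` with a set `S ⊆ ℝⁿ` (the first `m`
coordinates are free, the last `n` coordinates lie in `S`). -/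
def prodRm (m n : ℕ) (S : Set (EuclideanSpace ℝ (Fin n))) :
    Set (EuclideanSpace ℝ (Fin (m + n))) :=
  {x | (WithLp.toLp 2 (fun j => x (Fin.natAdd m j)) : EuclideanSpace ℝ (Fin n)) ∈ S}

section Aux

noncomputable def emb (m n : ℕ) : EuclideanSpace ℝ (Fin n) →ₗ[ℝ] EuclideanSpace ℝ (Fin (m + n)) where
  toFun x := WithLp.toLp 2 (fun i => Fin.addCases (motive := fun _ => ℝ) (fun _ => (0:ℝ)) (fun j => x j) i)
  map_add' x y := by
    ext i
    induction i using Fin.addCases with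
    | left i => simp
    | right i => simp
  map_smul' c x := by
    ext i
    induction i using Fin.addCases with
    | left i => simp
    | right i => simp

theorem emb_tail (m n : ℕ) (x : EuclideanSpace ℝ (Fin n)) (j : Fin n) :
    emb m n x (Fin.natAdd m j) = x j := by simp [emb]

theorem emb_injective (m n : ℕ) : Function.Injective (emb m n) := by
  intro x y hxy
  ext j
  have := congrFun (congrArg WithLp.ofLp hxy) (Fin.natAdd m j)
  simpa [emb_tail] using this

noncomputable def tailMap (m n : ℕ) :
    EuclideanSpace ℝ (Fin (m + n)) →ₗ[ℝ] EuclideanSpace ℝ (Fin n) where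
  toFun y := WithLp.toLp 2 (fun j => y (Fin.natAdd m j))
  map_add' _ _ := rfl
  map_smul' _ _ := rfl

theorem tail_emb (m n : ℕ) (x : EuclideanSpace ℝ (Fin n)) :
    tailMap m n (emb m n x) = x := by
  ext j; exact emb_tail m n x j

theorem emb_mem_compl (m n : ℕ) (F : Set (EuclideanSpace ℝ (Fin n)))
    (x : EuclideanSpace ℝ (Fin n)) (hx : x ∈ Fᶜ) : emb m n x ∈ (prodRm m n F)ᶜ := by
  intro hmem
  apply hx
  have : (WithLp.toLp 2 (fun j => emb m n x (Fin.natAdd m j)) : EuclideanSpace ℝ (Fin n)) = x := by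
    ext j; exact emb_tail m n x j
  simpa [prodRm, this] using hmem

theorem mem_compl_tail (m n : ℕ) (F : Set (EuclideanSpace ℝ (Fin n)))
    (y : EuclideanSpace ℝ (Fin (m + n))) (hy : y ∈ (prodRm m n F)ᶜ) :
    tailMap m n y ∈ Fᶜ := hy

end Aux


/-- If `F ⊆ ℝⁿ` is closed and `ℝⁿ ∖ F` is not globally `q`-convex, then
`ℝ^{m+n} ∖ (ℝᵐ × F)` is not globally `q`-convex. -/
theorem not_globallyConvex_prod
    (n m q : ℕ) (hm : 1 ≤ m) (F : Set (EuclideanSpace ℝ (Fin n))) (hF : IsClosed F)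
    (h : ¬ GloballyConvex n q Fᶜ) :
    ¬ GloballyConvex (m + n) q (prodRm m n F)ᶜ := by
  intro hG
  apply h
  intro L hLne hLdim
  set e := emb m n with he
  have econt : Continuous e := e.continuous_of_finiteDimensional
  have tcont : Continuous (tailMap m n) := (tailMap m n).continuous_of_finiteDimensional
  set L' : AffineSubspace ℝ (EuclideanSpace ℝ (Fin (m + n))) := L.map e.toAffineMap with hL'
  have hL'ne : (L' : Set (EuclideanSpace ℝ (Fin (m + n)))).Nonempty := by
    obtain ⟨x, hx⟩ := hLne
    exact ⟨e x, AffineSubspace.mem_map.2 ⟨x, hx, rfl⟩⟩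
  have hL'dim : Module.finrank ℝ L'.direction = q := by
    rw [hL', AffineSubspace.map_direction]
    rw [← hLdim]
    have : L.direction.map e.toAffineMap.linear = L.direction.map e := by
      congr 1
    rw [this]
    exact ((Submodule.equivMapOfInjective e (emb_injective m n) L.direction).finrank_eq).symm
  have key := hG L' hL'ne hL'dim
  -- the section ι : Fᶜ → (prodRm F)ᶜ
  let ι : TopCat.of (Fᶜ : Set (EuclideanSpace ℝ (Fin n))) ⟶
      TopCat.of ((prodRm m n F)ᶜ : Set (EuclideanSpace ℝ (Fin (m + n)))) :=
    TopCat.ofHom ⟨fun x => ⟨e x.1, emb_mem_compl m n F x.1 x.2⟩,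
      (econt.comp continuous_subtype_val).subtype_mk _⟩
  -- the homeomorphism-onto-image j : L ∩ Fᶜ → L' ∩ (prodRm F)ᶜ
  let jm : TopCat.of (((L : Set (EuclideanSpace ℝ (Fin n))) ∩ Fᶜ : Set (EuclideanSpace ℝ (Fin n)))) ⟶
      TopCat.of (((L' : Set (EuclideanSpace ℝ (Fin (m + n)))) ∩ (prodRm m n F)ᶜ : Set (EuclideanSpace ℝ (Fin (m + n))))) :=
    TopCat.ofHom ⟨fun x => ⟨e x.1, ⟨AffineSubspace.mem_map.2 ⟨x.1, x.2.1, rfl⟩,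
        emb_mem_compl m n F x.1 x.2.2⟩⟩,
      (econt.comp continuous_subtype_val).subtype_mk _⟩
  -- the retraction r
  have rmem : ∀ y : ((L' : Set (EuclideanSpace ℝ (Fin (m + n)))) ∩ (prodRm m n F)ᶜ : Set _),
      tailMap m n y.1 ∈ (L : Set (EuclideanSpace ℝ (Fin n))) ∩ Fᶜ := by
    rintro ⟨y, hyL', hyc⟩
    obtain ⟨x, hxL, hxy⟩ := AffineSubspace.mem_map.1 hyL'
    constructor
    · have : tailMap m n y = x := by rw [← hxy]; exact tail_emb m n x
      rw [this]; exact hxL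
    · exact mem_compl_tail m n F y hyc
  let rm : TopCat.of (((L' : Set (EuclideanSpace ℝ (Fin (m + n)))) ∩ (prodRm m n F)ᶜ : Set (EuclideanSpace ℝ (Fin (m + n))))) ⟶
      TopCat.of (((L : Set (EuclideanSpace ℝ (Fin n))) ∩ Fᶜ : Set (EuclideanSpace ℝ (Fin n)))) :=
    TopCat.ofHom ⟨fun y => ⟨tailMap m n y.1, rmem y⟩,
      (tcont.comp continuous_subtype_val).subtype_mk _⟩
  have hjr : jm ≫ rm = 𝟙 _ := by
    ext x
    exact congrFun (congrArg WithLp.ofLp (tail_emb m n x.1)) _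
  have hsquare : jm ≫ inclTop (↑L' ∩ (prodRm m n F)ᶜ) (prodRm m n F)ᶜ Set.inter_subset_right
      = inclTop (↑L ∩ Fᶜ) Fᶜ Set.inter_subset_right ≫ ι := by
    ext x
    rfl
  have hpt : jm ≫ toPt _ = toPt _ := rfl
  intro a ha0 hainc
  have h0' : (singularHomology (q - 1)).map (toPt _) ((singularHomology (q - 1)).map jm a) = 0 := by
    rw [← comp_apply, ← (singularHomology (q - 1)).map_comp, hpt]
    exact ha0
  have hinc' : (singularHomology (q - 1)).map (inclTop (↑L' ∩ (prodRm m n F)ᶜ) (prodRm m n F)ᶜ Set.inter_subset_right)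
      ((singularHomology (q - 1)).map jm a) = 0 := by
    rw [← comp_apply, ← (singularHomology (q - 1)).map_comp, hsquare,
      (singularHomology (q - 1)).map_comp, comp_apply, hainc]
    exact ((singularHomology (q - 1)).map ι).hom.map_zero
  have hzero : (singularHomology (q - 1)).map jm a = 0 := key ((singularHomology (q - 1)).map jm a) h0' hinc'
  have : a = (singularHomology (q - 1)).map rm ((singularHomology (q - 1)).map jm a) := by
    rw [← comp_apply, ← (singularHomology (q - 1)).map_comp, hjr, (singularHomology (q - 1)).map_id]
    rfl
  rw [this, hzero]
  exact ((singularHomology (q - 1)).map rm).hom.map_zero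
end
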